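/- arXiv:2307.02627 — 7 statements merged into one kernel-verified Lean document; each statement's English description precedes it below -/
import Mathlib

section
/- The SUBSET proxy mechanism satisfies Preference Monotonicity: if j ∈ SUBSET(P, i) with j ≠ i, and voter k (k ≠ i) satisfies Agree(P_i, P_j) ⊆ Agree(P_i, P_k) and Disagree(P_i, P_k) ⊆ Disagree(P_i, P_j), then k ∈ SUBSET(P, i). -/
open scoped Classical

/-- A partial preference: an irreflexive, antisymmetric, transitive relation on `A`,
identified with its set of strict pairwise comparisons (edges). -/
structure PPref (A : Type*) where
  rel : A → A → Prop
  irrefl : ∀ a, ¬ rel a a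
  antisymm : ∀ a b, rel a b → ¬ rel b a
  trans : ∀ a b c, rel a b → rel b c → rel a c

namespace PPref

variable {A : Type*}

/-- `P ⊆ Q` as sets of edges. -/
def subsetOf (P Q : PPref A) : Prop := ∀ a b, P.rel a b → Q.rel a b

/-- The empty partial preference (no edges). -/
def isEmptyPref (P : PPref A) : Prop := ∀ a b, ¬ P.rel a b

/-- A linear (complete) preference. -/
def isLinear (P : PPref A) : Prop := ∀ a b, a ≠ b → P.rel a b ∨ P.rel b a

/-- Relabelling alternatives by a permutation `ψ`. -/
def map (ψ : Equiv.Perm A) (P : PPref A) : PPref A where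
  rel a b := P.rel (ψ.symm a) (ψ.symm b)
  irrefl a h := P.irrefl _ h
  antisymm a b h h' := P.antisymm _ _ h h'
  trans a b c h h' := P.trans _ _ _ h h'

end PPref

/-- Linear orders over `A`. -/
def LPref (A : Type*) := {P : PPref A // P.isLinear}

/-- Relabelling alternatives of a linear order. -/
def LPref.map {A : Type*} (ψ : Equiv.Perm A) (L : LPref A) : LPref A :=
  ⟨PPref.map ψ L.1, fun a b hab => L.2 _ _ fun h => hab (ψ.symm.injective h)⟩

section Defs

variable {N : Type*} {A : Type*}

/-- The defining axioms of a proxy mechanism. -/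
def IsProxyMech (g : (N → PPref A) → N → Set N) : Prop :=
  (∀ (P : N → PPref A) (i : N), (P i).isEmptyPref → g P i = {j | j ≠ i}) ∧
  (∀ (P : N → PPref A) (i : N), (P i).isLinear → g P i = {i}) ∧
  (∀ (P : N → PPref A) (i : N), ¬ (P i).isLinear → i ∉ g P i)

/-- Edges on which `P` and `Q` agree. -/
def Agree (P Q : PPref A) : Set (A × A) := {p | P.rel p.1 p.2 ∧ Q.rel p.1 p.2}

/-- Edges of `P` whose reversal lies in `Q`. -/
def Disagree (P Q : PPref A) : Set (A × A) := {p | P.rel p.1 p.2 ∧ Q.rel p.2 p.1}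

/-- Proxy Availability. -/
def PA (g : (N → PPref A) → N → Set N) : Prop :=
  ∀ (i : N) (Pi : PPref A), ∃ P : N → PPref A, P i = Pi ∧ g P i ≠ ∅

/-- Independence of Irrelevant Proxies. -/
def IIP (g : (N → PPref A) → N → Set N) : Prop :=
  ∀ (P P' : N → PPref A) (i j : N), P i = P' i → P j = P' j →
    (j ∈ g P i ↔ j ∈ g P' i)

/-- Preference Monotonicity. -/
def PM (g : (N → PPref A) → N → Set N) : Prop :=
  ∀ (P : N → PPref A) (i j k : N), j ∈ g P i → j ≠ i → k ≠ i →
    Agree (P i) (P j) ⊆ Agree (P i) (P k) →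
    Disagree (P i) (P k) ⊆ Disagree (P i) (P j) → k ∈ g P i

/-- The SUBSET proxy mechanism. -/
noncomputable def SUBSETg : (N → PPref A) → N → Set N := fun P i =>
  if (P i).isEmptyPref then {j | j ≠ i}
  else if (P i).isLinear then ({i} : Set N)
  else {j | j ≠ i ∧ (P i).subsetOf (P j)}

/-- The proxy actually chosen by voter `i`: herself if she votes directly (permitted set is
`{i}` or empty), otherwise the `S i`-maximal permitted proxy. -/
noncomputable def proxyOf (g : (N → PPref A) → N → Set N) (P : N → PPref A)
    (S : N → LPref N) (i : N) : N :=
  if g P i = {i} ∨ g P i = ∅ then i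
  else if h : ∃ j ∈ g P i, ∀ k ∈ g P i, k ≠ j → (S i).1.rel j k then h.choose else i

/-- The linear order cast on behalf of voter `i` by her guru: follow delegations
(`Fintype.card N` steps suffice); a terminal voter casts her own linear order if she has one,
otherwise her default; voters caught in cycles cast their defaults. -/
noncomputable def gurus [Fintype N] (g : (N → PPref A) → N → Set N)
    (P : N → PPref A) (S : N → LPref N) (D : N → LPref A) (i : N) : LPref A :=
  let d := proxyOf g P S
  let t := d^[Fintype.card N] i
  if d t = t then (if h : (P t).isLinear then ⟨P t, h⟩ else D t) else D i

/-- Zero Regret: the vote cast by each voter's guru extends her submitted partial order. -/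
def ZR [Fintype N] (g : (N → PPref A) → N → Set N) : Prop :=
  ∀ (P : N → PPref A) (S : N → LPref N) (D : N → LPref A),
    (∀ i, (P i).subsetOf (D i).1) → ∀ i, (P i).subsetOf (gurus g P S D i).1

end Defs

/-- The SUBSET proxy mechanism satisfies Preference Monotonicity. -/
theorem subset_satisfies_PM {N A : Type*} :
    ∀ (P : N → PPref A) (i j k : N),
      j ∈ SUBSETg P i → j ≠ i → k ≠ i →
      Agree (P i) (P j) ⊆ Agree (P i) (P k) →
      Disagree (P i) (P k) ⊆ Disagree (P i) (P j) →
      k ∈ SUBSETg P i := by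
  intro P i j k hj hji hki hA hD
  unfold SUBSETg at *
  by_cases he : (P i).isEmptyPref
  · simp [he]; exact hki
  · by_cases hl : (P i).isLinear
    · simp [he, hl] at hj; exact absurd hj hji
    · simp [he, hl] at hj ⊢
      refine ⟨hki, fun a b hab => ?_⟩
      exact (hA (show (a,b) ∈ Agree (P i) (P j) from ⟨hab, hj.2 a b hab⟩)).2
end

section
/- If a proxy mechanism g satisfies Proxy Availability, Independence of Irrelevant Proxies, and Preference Monotonicity, then for any profile P of partial orders, any voter i with P_i not a linear order, and any voter j with P_i ⊆ P_j, we have j ∈ g(P, i). -/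
open scoped Classical

/-- If a proxy mechanism satisfies PA, IIP and PM, then every voter `j ≠ i` whose partial
order extends `P i` (with `P i` not linear) is a permitted proxy for `i`. -/
theorem pa_iip_pm_subset_lemma {N A : Type*} [Fintype N]
    (hN : 3 ≤ Fintype.card N)
    (g : (N → PPref A) → N → Set N) (hg : IsProxyMech g)
    (hPA : PA g) (hIIP : IIP g) (hPM : PM g) :
    ∀ (P : N → PPref A) (i j : N), j ≠ i → ¬ (P i).isLinear →
      (P i).subsetOf (P j) → j ∈ g P i := by
  intro P i j hji hnl hsub
  -- a third voter m distinct from i and j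
  obtain ⟨m, hmi, hmj⟩ : ∃ m : N, m ≠ i ∧ m ≠ j := by
    by_contra h
    push_neg at h
    have hsub2 : (Finset.univ : Finset N) ⊆ {i, j} := by
      intro x _
      rcases Classical.em (x = i) with hx | hx
      · simp [hx]
      · simp [h x hx]
    have := Finset.card_le_card hsub2
    have h2 : ({i, j} : Finset N).card ≤ 2 :=
      (Finset.card_insert_le _ _).trans (by simp)
    simp only [Finset.card_univ] at this
    omega
  obtain ⟨Q, hQi, hQne⟩ := hPA i (P i)
  obtain ⟨k, hk⟩ := Set.nonempty_iff_ne_empty.mpr hQne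
  have hki : k ≠ i := by
    intro h
    subst h
    exact hg.2.2 Q k (by rw [hQi]; exact hnl) hk
  set Q' := Function.update Q m (Q k) with hQ'def
  have hQ'i : Q' i = Q i := Function.update_of_ne (Ne.symm hmi) _ _
  have hQ'm : Q' m = Q k := Function.update_self _ _ _
  -- m is a permitted proxy in Q'
  have hmQ' : m ∈ g Q' i := by
    by_cases hkm : k = m
    · subst hkm
      have : Q' = Q := by rw [hQ'def, Function.update_eq_self]
      rw [this]
      exact hk
    · have hQ'k : Q' k = Q k := Function.update_of_ne hkm _ _
      have hk' : k ∈ g Q' i := (hIIP Q Q' i k hQ'i.symm hQ'k.symm).mp hk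
      refine hPM Q' i k m hk' hki hmi ?_ ?_
      · rw [hQ'k, hQ'm]
      · rw [hQ'k, hQ'm]
  set R := Function.update Q' j (P j) with hRdef
  have hRi : R i = P i := by
    rw [hRdef, Function.update_of_ne (Ne.symm hji), hQ'i, hQi]
  have hRm : R m = Q' m := Function.update_of_ne hmj _ _
  have hRj : R j = P j := Function.update_self _ _ _
  have hmR : m ∈ g R i := (hIIP Q' R i m (by rw [hRi, hQ'i, hQi]) hRm.symm).mp hmQ'
  have hjR : j ∈ g R i := by
    refine hPM R i m j hmR hmi hji ?_ ?_
    · rintro ⟨a, b⟩ ⟨h1, -⟩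
      refine ⟨h1, ?_⟩
      rw [hRj]
      exact hsub a b (by rwa [hRi] at h1)
    · rintro ⟨a, b⟩ ⟨h1, h2⟩
      rw [hRi] at h1
      rw [hRj] at h2
      exact absurd ((P j).antisymm a b (hsub a b h1)) (by simpa using h2)
  exact (hIIP R P i j hRi hRj).mp hjR
end

section
/- The UNIV proxy mechanism satisfies Proxy Availability, Independence of Irrelevant Proxies, and Preference Monotonicity, but fails Zero Regret (when |A| ≥ 3 and n ≥ 2). -/
open scoped Classical

/-- The UNIV proxy mechanism. -/
noncomputable def UNIVg {N A : Type*} : (N → PPref A) → N → Set N := fun P i =>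
  if (P i).isLinear then ({i} : Set N) else {j | j ≠ i}

/-- A canonical linear order on a fintype, pulled back from `Fin`. -/
noncomputable def finLin (A : Type*) [Fintype A] : LPref A :=
  ⟨⟨fun a b => Fintype.equivFin A a < Fintype.equivFin A b,
    fun _ => lt_irrefl _,
    fun _ _ h h' => absurd h' (not_lt.mpr h.le),
    fun _ _ _ => lt_trans⟩,
   fun a b hab => by
     rcases lt_or_gt_of_ne (fun h => hab ((Fintype.equivFin A).injective h)) with h | h
     · exact Or.inl h
     · exact Or.inr h⟩

lemma linear_max {N : Type*} (r : PPref N) (hr : r.isLinear) (s : Finset N)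
    (hs : s.Nonempty) : ∃ m ∈ s, ∀ k ∈ s, k ≠ m → r.rel m k := by
  classical
  induction s using Finset.induction_on with
  | empty => simp at hs
  | @insert x s hx ih =>
    rcases s.eq_empty_or_nonempty with rfl | hs'
    · exact ⟨x, by simp, by simp⟩
    · obtain ⟨m, hm, hmax⟩ := ih hs'
      by_cases hxm : x = m
      · refine ⟨m, Finset.mem_insert_of_mem hm, fun k hk hkm => ?_⟩
        rcases Finset.mem_insert.1 hk with rfl | hk'
        · exact absurd hxm hkm
        · exact hmax k hk' hkm
      · rcases hr x m hxm with h | h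
        · refine ⟨x, Finset.mem_insert_self _ _, fun k hk hkx => ?_⟩
          rcases Finset.mem_insert.1 hk with rfl | hk'
          · exact absurd rfl hkx
          · by_cases hkm : k = m
            · subst hkm; exact h
            · exact r.trans _ _ _ h (hmax k hk' hkm)
        · refine ⟨m, Finset.mem_insert_of_mem hm, fun k hk hkm => ?_⟩
          rcases Finset.mem_insert.1 hk with rfl | hk'
          · exact h
          · exact hmax k hk' hkm

/-- UNIV satisfies PA, IIP and PM, but fails ZR (when `|A| ≥ 3` and `n ≥ 2`). -/
theorem univ_properties {N A : Type*} [Fintype N] [Fintype A]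
    (hA : 3 ≤ Fintype.card A) (hN : 2 ≤ Fintype.card N) :
    PA (UNIVg (N := N) (A := A)) ∧ IIP (UNIVg (N := N) (A := A)) ∧
    PM (UNIVg (N := N) (A := A)) ∧ ¬ ZR (UNIVg (N := N) (A := A)) := by
  have hNnt : Nontrivial N := Fintype.one_lt_card_iff_nontrivial.mp (by omega)
  have hAnt : Nontrivial A := Fintype.one_lt_card_iff_nontrivial.mp (by omega)
  refine ⟨?_, ?_, ?_, ?_⟩
  · -- PA
    intro i Pi
    refine ⟨fun _ => Pi, rfl, ?_⟩
    by_cases h : Pi.isLinear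
    · simp [UNIVg, h]
    · obtain ⟨j, hj⟩ := exists_ne i
      simp only [UNIVg, h, if_neg]
      exact Set.nonempty_iff_ne_empty.mp ⟨j, hj⟩
  · -- IIP
    intro P P' i j hi _
    simp [UNIVg, hi]
  · -- PM
    intro P i j k hj hji hki _ _
    by_cases h : (P i).isLinear
    · simp [UNIVg, h] at hj; exact absurd hj hji
    · simp [UNIVg, h] at hj ⊢; exact hki
  · -- ¬ ZR
    intro hZR
    set Lin : LPref A := finLin A with hLin
    obtain ⟨a, b, hLab⟩ : ∃ a b, Lin.1.rel a b := by
      obtain ⟨p, q, hpq⟩ := exists_pair_ne A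
      rcases Lin.2 p q hpq with h | h
      · exact ⟨p, q, h⟩
      · exact ⟨q, p, h⟩
    have hne : a ≠ b := fun h => Lin.1.irrefl a (h ▸ hLab)
    obtain ⟨c, hca, hcb⟩ : ∃ c : A, c ≠ a ∧ c ≠ b := by
      by_contra h
      push_neg at h
      have hsub : (Finset.univ : Finset A) ⊆ {a, b} := by
        intro x _
        by_cases hx : x = a
        · simp [hx]
        · simp [h x hx]
      have := Finset.card_le_card hsub
      have h2 : ({a, b} : Finset A).card ≤ 2 :=
        (Finset.card_insert_le _ _).trans (by simp)
      simp only [Finset.card_univ] at this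
      omega
    -- the non-linear single-edge preference b ≻ a
    set Pi : PPref A :=
      ⟨fun x y => x = b ∧ y = a,
       fun x ⟨h1, h2⟩ => hne (h1.symm.trans h2).symm,
       fun x y ⟨_, h2⟩ ⟨h3, _⟩ => hne (h2.symm.trans h3),
       fun x y z ⟨_, h2⟩ ⟨h3, _⟩ => absurd (h2.symm.trans h3) hne⟩ with hPidef
    have hPiLin : ¬ Pi.isLinear := by
      intro h
      rcases h b c (Ne.symm hcb) with ⟨_, h2⟩ | ⟨h1, _⟩
      · exact hca h2
      · exact hcb h1
    obtain ⟨i0, hi0⟩ := exists_pair_ne N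
    obtain ⟨j1, hj1⟩ := exists_ne i0
    set P : N → PPref A := fun k => if k = i0 then Pi else Lin.1 with hP
    set S : N → LPref N := fun _ => finLin N with hS
    set Lin' : LPref A := LPref.map (Equiv.swap a b) Lin with hLin'
    set D : N → LPref A := fun k => if k = i0 then Lin' else Lin with hD
    have hPi0 : P i0 = Pi := by simp [hP]
    have hPk : ∀ k, k ≠ i0 → P k = Lin.1 := fun k hk => by simp [hP, hk]
    have hext : ∀ k, (P k).subsetOf (D k).1 := by
      intro k
      by_cases hk : k = i0
      · subst hk
        simp only [hPi0, hD, if_pos rfl]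
        rintro x y ⟨hx, hy⟩
        rw [hx, hy]
        show Lin.1.rel ((Equiv.swap a b).symm b) ((Equiv.swap a b).symm a)
        simpa using hLab
      · rw [hPk k hk]
        simp only [hD, if_neg hk]
        exact fun _ _ h => h
    have hgi0 : UNIVg P i0 = {k | k ≠ i0} := by
      rw [UNIVg]
      simp only [hPi0, if_neg hPiLin]
    have hcond : ¬ (UNIVg P i0 = {i0} ∨ UNIVg P i0 = ∅) := by
      have hj1mem : j1 ∈ UNIVg P i0 := by rw [hgi0]; exact hj1
      rintro (h | h) <;> rw [h] at hj1mem
      · exact hj1 hj1mem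
      · exact hj1mem
    have hmax : ∃ j ∈ UNIVg P i0, ∀ k ∈ UNIVg P i0, k ≠ j → (S i0).1.rel j k := by
      obtain ⟨m, hm, hmx⟩ := linear_max (S i0).1 (S i0).2
        (Finset.univ.filter (· ≠ i0)) ⟨j1, by simp [hj1]⟩
      refine ⟨m, by rw [hgi0]; simpa using (Finset.mem_filter.1 hm).2, fun k hk hkm => ?_⟩
      rw [hgi0] at hk
      exact hmx k (by simpa using hk) hkm
    have hd0 : proxyOf UNIVg P S i0 = hmax.choose := by
      rw [proxyOf, if_neg hcond, dif_pos hmax]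
    set j := hmax.choose with hj
    have hjne : j ≠ i0 :=
      (Set.ext_iff.mp hgi0 hmax.choose).mp hmax.choose_spec.1
    have hdk : ∀ k, k ≠ i0 → proxyOf UNIVg P S k = k := by
      intro k hk
      rw [proxyOf, if_pos]
      left
      rw [UNIVg]
      simp only [hPk k hk, if_pos Lin.2]
    have ht : (proxyOf UNIVg P S)^[Fintype.card N] i0 = j := by
      obtain ⟨m, hm⟩ : ∃ m, Fintype.card N = m + 1 := ⟨Fintype.card N - 1, by omega⟩
      rw [hm, Function.iterate_succ_apply, hd0]
      exact Function.iterate_fixed (hdk j hjne) m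
    have hsub := hZR P S D hext i0
    have hPjLin : (P j).isLinear := by rw [hPk j hjne]; exact Lin.2
    have hg : gurus UNIVg P S D i0 = ⟨P j, hPjLin⟩ := by
      rw [gurus]
      simp only [ht]
      rw [if_pos (hdk j hjne)]
      exact dif_pos (by rw [ht]; exact hPjLin)
    rw [hg, hPi0] at hsub
    have hrel : (P j).rel b a := hsub b a ⟨rfl, rfl⟩
    rw [hPk j hjne] at hrel
    exact Lin.1.antisymm a b hLab hrel
end

section
/- If f is anonymous and g is proxy-mechanism anonymous, then the pair (f, g) satisfies Proxy Vote Anonymity. -/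
open scoped Classical

section SCF

variable {N : Type*} {A : Type*}

/-- Anonymity of a social choice function. -/
def Anonymous [Fintype N] (f : (N → LPref A) → A) : Prop :=
  ∀ (ψ : Equiv.Perm N) (L : N → LPref A), f (fun i => L (ψ i)) = f L

/-- Neutrality of a social choice function. -/
def Neutral (f : (N → LPref A) → A) : Prop :=
  ∀ (ψ : Equiv.Perm A) (L : N → LPref A), ψ (f L) = f (fun i => LPref.map ψ (L i))

/-- Proxy Vote Anonymity of a pair `(f, g)`: relabelling voters (in preferences, proxy
rankings — including the names occurring inside them — and defaults) leaves the outcome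
unchanged. -/
def PVAnon [Fintype N] (f : (N → LPref A) → A) (g : (N → PPref A) → N → Set N) : Prop :=
  ∀ (P : N → PPref A) (S : N → LPref N) (D : N → LPref A),
    (∀ i, (P i).subsetOf (D i).1) →
    ∀ ψ : Equiv.Perm N,
      f (gurus g P S D) =
        f (gurus g (fun i => P (ψ.symm i)) (fun i => LPref.map ψ (S (ψ.symm i)))
            (fun i => D (ψ.symm i)))

/-- Proxy Vote Neutrality of a pair `(f, g)`: relabelling alternatives renames the outcome. -/
def PVNeut [Fintype N] (f : (N → LPref A) → A) (g : (N → PPref A) → N → Set N) : Prop :=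
  ∀ (P : N → PPref A) (S : N → LPref N) (D : N → LPref A),
    (∀ i, (P i).subsetOf (D i).1) →
    ∀ ψ : Equiv.Perm A,
      ψ (f (gurus g P S D)) =
        f (gurus g (fun i => PPref.map ψ (P i)) S (fun i => LPref.map ψ (D i)))

/-- Proxy Vote Addition Monotonicity. -/
def PVAM [Fintype N] [DecidableEq N] (f : (N → LPref A) → A)
    (g : (N → PPref A) → N → Set N) : Prop :=
  ∀ (P : N → PPref A) (S : N → LPref N) (D : N → LPref A),
    (∀ j, (P j).subsetOf (D j).1) →
    ∀ (i : N) (a b : A) (Pi' : PPref A),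
      f (gurus g P S D) = a →
      (∀ x y, Pi'.rel x y ↔ (P i).rel x y ∨ (x = a ∧ y = b)) →
      Pi'.subsetOf (D i).1 →
      f (gurus g (Function.update P i Pi') S D) = a

/-- Proxy Vote Deletion Monotonicity. -/
def PVDM [Fintype N] [DecidableEq N] (f : (N → LPref A) → A)
    (g : (N → PPref A) → N → Set N) : Prop :=
  ∀ (P : N → PPref A) (S : N → LPref N) (D : N → LPref A),
    (∀ j, (P j).subsetOf (D j).1) →
    ∀ (i : N) (a b : A) (Pi' : PPref A),
      f (gurus g P S D) = a →
      (∀ x y, Pi'.rel x y ↔ (P i).rel x y ∧ ¬ (x = b ∧ y = a)) →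
      f (gurus g (Function.update P i Pi') S D) = a

/-- Weak monotonicity of a social choice function: moving the winner `a` up one place
(replacing `b ≻ a` by `a ≻ b` in one voter's ballot) preserves the winner. -/
def WeakMono [DecidableEq N] (f : (N → LPref A) → A) : Prop :=
  ∀ (L : N → LPref A) (i : N) (a b : A) (Li' : LPref A),
    f L = a →
    (∀ x y, Li'.1.rel x y ↔ (((L i).1.rel x y ∧ ¬ (x = b ∧ y = a)) ∨ (x = a ∧ y = b))) →
    f (Function.update L i Li') = a

end SCF

/-- Proxy-mechanism anonymity: relabelling voters by `ψ` (so that new voter `ψ i` holds old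
voter `i`'s preference) relabels each permitted-proxy set accordingly. -/
def MechAnon {N A : Type*} (g : (N → PPref A) → N → Set N) : Prop :=
  ∀ (P : N → PPref A) (i : N) (ψ : Equiv.Perm N),
    g (fun j => P (ψ.symm j)) (ψ i) = (fun x => ψ x) '' g P i

section AuxAnon

variable {N A : Type*}

/-- Uniqueness of the `L`-maximal element of a set. -/
lemma max_unique (L : LPref N) (G : Set N) {j j' : N}
    (hj : j ∈ G ∧ ∀ k ∈ G, k ≠ j → L.1.rel j k)
    (hj' : j' ∈ G ∧ ∀ k ∈ G, k ≠ j' → L.1.rel j' k) : j = j' := by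
  by_contra hne
  exact L.1.antisymm j j' (hj.2 j' hj'.1 (Ne.symm hne)) (hj'.2 j hj.1 hne)

lemma proxyOf_equiv (g : (N → PPref A) → N → Set N) (hga : MechAnon g)
    (P : N → PPref A) (S : N → LPref N) (ψ : Equiv.Perm N) (i : N) :
    proxyOf g (fun j => P (ψ.symm j)) (fun j => LPref.map ψ (S (ψ.symm j))) (ψ i)
      = ψ (proxyOf g P S i) := by
  have hG : g (fun j => P (ψ.symm j)) (ψ i) = (fun x => ψ x) '' g P i := hga P i ψ
  have hSi : (fun j => LPref.map ψ (S (ψ.symm j))) (ψ i) = LPref.map ψ (S i) := by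
    simp
  unfold proxyOf
  have hsingl : ((fun x => ψ x) '' g P i = {ψ i}) ↔ g P i = {i} := by
    constructor
    · intro h
      have := congrArg (Set.image (fun x => ψ.symm x)) h
      simpa [Set.image_image, Set.image_singleton] using this
    · intro h; rw [h]; simp
  have hempty : ((fun x => ψ x) '' g P i = ∅) ↔ g P i = ∅ := by
    simp [Set.image_eq_empty]
  have hmaxiff : (∃ j ∈ g (fun j => P (ψ.symm j)) (ψ i),
      ∀ k ∈ g (fun j => P (ψ.symm j)) (ψ i), k ≠ j →
        ((fun j => LPref.map ψ (S (ψ.symm j))) (ψ i)).1.rel j k) ↔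
      (∃ j ∈ g P i, ∀ k ∈ g P i, k ≠ j → (S i).1.rel j k) := by
    rw [hG, hSi]
    constructor
    · rintro ⟨j, ⟨j0, hj0, rfl⟩, hmax⟩
      refine ⟨j0, hj0, fun k hk hkne => ?_⟩
      have := hmax (ψ k) ⟨k, hk, rfl⟩ (fun h => hkne (ψ.injective h))
      simpa [LPref.map, PPref.map] using this
    · rintro ⟨j, hj, hmax⟩
      refine ⟨ψ j, ⟨j, hj, rfl⟩, ?_⟩
      rintro k ⟨k0, hk0, rfl⟩ hkne
      have : k0 ≠ j := fun h => hkne (by rw [h])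
      have := hmax k0 hk0 this
      simpa [LPref.map, PPref.map] using this
  rw [hG, hSi]
  by_cases hc : g P i = {i} ∨ g P i = ∅
  · rw [if_pos hc, if_pos (by rcases hc with h | h <;> simp [h, hsingl.mpr, hempty.mpr])]
  · rw [if_neg hc, if_neg (by
      rintro (h | h)
      · exact hc (Or.inl (hsingl.mp h))
      · exact hc (Or.inr (hempty.mp h)))]
    by_cases hex : ∃ j ∈ g P i, ∀ k ∈ g P i, k ≠ j → (S i).1.rel j k
    · have hex' : ∃ j ∈ (fun x => ψ x) '' g P i,
          ∀ k ∈ (fun x => ψ x) '' g P i, k ≠ j → (LPref.map ψ (S i)).1.rel j k := by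
        have := hmaxiff.mpr hex
        rwa [hG, hSi] at this
      rw [dif_pos hex, dif_pos hex']
      -- both choices are maximal; uniqueness
      have h1 := hex'.choose_spec
      obtain ⟨j0, hj0, hj0eq⟩ := h1.1
      have h2 := hex.choose_spec
      -- ψ h2.choose is also maximal in the image
      have hpsi : ψ hex.choose ∈ (fun x => ψ x) '' g P i ∧
          ∀ k ∈ (fun x => ψ x) '' g P i, k ≠ ψ hex.choose →
            (LPref.map ψ (S i)).1.rel (ψ hex.choose) k := by
        refine ⟨⟨hex.choose, h2.1, rfl⟩, ?_⟩
        rintro k ⟨k0, hk0, rfl⟩ hkne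
        have : k0 ≠ hex.choose := fun h => hkne (by rw [h])
        have := h2.2 k0 hk0 this
        simpa [LPref.map, PPref.map] using this
      exact max_unique (LPref.map ψ (S i)) _ ⟨h1.1, h1.2⟩ hpsi
    · have hex' : ¬ ∃ j ∈ (fun x => ψ x) '' g P i,
          ∀ k ∈ (fun x => ψ x) '' g P i, k ≠ j → (LPref.map ψ (S i)).1.rel j k := by
        intro h
        apply hex
        apply hmaxiff.mp
        rwa [hG, hSi]
      rw [dif_neg hex, dif_neg hex']

lemma gurus_equiv [Fintype N] (g : (N → PPref A) → N → Set N) (hga : MechAnon g)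
    (P : N → PPref A) (S : N → LPref N) (D : N → LPref A) (ψ : Equiv.Perm N) (i : N) :
    gurus g (fun j => P (ψ.symm j)) (fun j => LPref.map ψ (S (ψ.symm j)))
      (fun j => D (ψ.symm j)) (ψ i) = gurus g P S D i := by
  have hsemi : Function.Semiconj (fun x => ψ x) (proxyOf g P S)
      (proxyOf g (fun j => P (ψ.symm j)) (fun j => LPref.map ψ (S (ψ.symm j)))) := by
    intro x
    exact (proxyOf_equiv g hga P S ψ x).symm
  have hiter := (hsemi.iterate_right (Fintype.card N)) i
  unfold gurus
  simp only []
  set d := proxyOf g P S with hd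
  set d' := proxyOf g (fun j => P (ψ.symm j)) (fun j => LPref.map ψ (S (ψ.symm j))) with hd'
  set t := d^[Fintype.card N] i with ht
  have ht' : d'^[Fintype.card N] (ψ i) = ψ t := hiter.symm
  rw [ht']
  have hdt : d' (ψ t) = ψ (d t) := (hsemi t).symm
  rw [hdt]
  by_cases hfix : d t = t
  · rw [hfix, if_pos rfl, if_pos rfl]
    simp
    by_cases hl : (P t).isLinear
    · exact (dif_pos (by simpa using hl)).trans (dif_pos hl).symm
    · exact (dif_neg (by simpa using hl)).trans
        (show D t = (if h : (P t).isLinear then (⟨P t, h⟩ : LPref A) else D t) from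
          (dif_neg hl (t := fun h => (⟨P t, h⟩ : LPref A)) (e := fun _ => D t)).symm)
  · rw [if_neg (fun h => hfix (ψ.injective h)), if_neg hfix]
    simp

end AuxAnon

/-- If `f` is anonymous and `g` is proxy-mechanism anonymous, then `(f, g)` satisfies
Proxy Vote Anonymity. -/

theorem anon_mechanon_implies_pvanon {N A : Type*} [Fintype N]
    (f : (N → LPref A) → A) (g : (N → PPref A) → N → Set N)
    (hg : IsProxyMech g) (hf : Anonymous f) (hga : MechAnon g) : PVAnon f g := by
  intro P S D hD ψ
  have hkey : (fun i => gurus g (fun j => P (ψ.symm j)) (fun j => LPref.map ψ (S (ψ.symm j)))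
      (fun j => D (ψ.symm j)) (ψ i)) = gurus g P S D := by
    funext i
    exact gurus_equiv g hga P S D ψ i
  calc f (gurus g P S D)
      = f (fun i => gurus g (fun j => P (ψ.symm j)) (fun j => LPref.map ψ (S (ψ.symm j)))
          (fun j => D (ψ.symm j)) (ψ i)) := by rw [hkey]
    _ = f (gurus g (fun j => P (ψ.symm j)) (fun j => LPref.map ψ (S (ψ.symm j)))
          (fun j => D (ψ.symm j))) := hf ψ _
end

section
/- If f is neutral and g is proxy-mechanism neutral, then the pair (f, g) satisfies Proxy Vote Neutrality. -/
open scoped Classical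

/-- Proxy-mechanism neutrality: relabelling the alternatives does not affect any voter's
set of permitted proxies. -/
def MechNeut {N A : Type*} (g : (N → PPref A) → N → Set N) : Prop :=
  ∀ (P : N → PPref A) (i : N) (ψ : Equiv.Perm A),
    g (fun j => PPref.map ψ (P j)) i = g P i

/-- If `f` is neutral and `g` is proxy-mechanism neutral, then `(f, g)` satisfies
Proxy Vote Neutrality. -/
theorem neut_mechneut_implies_pvneut {N A : Type*} [Fintype N]
    (f : (N → LPref A) → A) (g : (N → PPref A) → N → Set N)
    (hg : IsProxyMech g) (hf : Neutral f) (hgn : MechNeut g) : PVNeut f g := by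
  intro P S D hPD ψ
  have hlin : ∀ t : N, (PPref.map ψ (P t)).isLinear ↔ (P t).isLinear := by
    intro t
    constructor
    · intro h a b hab
      have := h (ψ a) (ψ b) (fun he => hab (ψ.injective he))
      simpa [PPref.map] using this
    · intro h a b hab
      exact h _ _ (fun he => hab (ψ.symm.injective he))
  have hgP : g (fun j => PPref.map ψ (P j)) = g P := by
    funext i
    exact hgn P i ψ
  have key : gurus g (fun i => PPref.map ψ (P i)) S (fun i => LPref.map ψ (D i))
      = fun i => LPref.map ψ (gurus g P S D i) := by
    funext i
    have hproxy : proxyOf g (fun j => PPref.map ψ (P j)) S = proxyOf g P S := by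
      funext j
      simp only [proxyOf, hgP]
      exact if_congr Iff.rfl rfl (by congr 1)
    simp only [gurus, hproxy]
    set t := (proxyOf g P S)^[Fintype.card N] i with ht
    by_cases hd : proxyOf g P S t = t
    · simp only [hproxy, ← ht, hd, if_true]
      by_cases hl : (P t).isLinear
      · have hc : (PPref.map ψ (P ((proxyOf g (fun i => PPref.map ψ (P i)) S)^[Fintype.card N] i))).isLinear := by
          rw [hproxy]; exact (hlin t).mpr hl
        refine (dif_pos hc).trans (Eq.trans ?_ (congrArg (LPref.map ψ)
          (dif_pos (show (P ((proxyOf g P S)^[Fintype.card N] i)).isLinear from hl))).symm)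
        exact Subtype.ext rfl
      · have hc : ¬ (PPref.map ψ (P ((proxyOf g (fun i => PPref.map ψ (P i)) S)^[Fintype.card N] i))).isLinear := by
          rw [hproxy]; exact fun h => hl ((hlin t).mp h)
        refine (dif_neg hc).trans (Eq.trans ?_ (congrArg (LPref.map ψ)
          (dif_neg (show ¬ (P ((proxyOf g P S)^[Fintype.card N] i)).isLinear from hl))).symm)
        rfl
    · simp only [hproxy, ← ht, hd, if_false]
  rw [key]
  exact hf ψ (gurus g P S D)
end

section
/- Let |A| = 3 and suppose the proxy mechanism g satisfies Preference Monotonicity and Independence of Irrelevant Proxies, with |N| ≥ 3. Then there exist a voter i, alternatives a, b, c, partial orders P_i, P'_i with either P'_i = P_i ∪ {a ≻ b} or P'_i = P_i \ {b ≻ a}, a profile P_{-i} of the other voters, a proxy choice profile S, and a default vote profile D, such that the vote cast by i's guru is the linear order b ≻ a ≻ c under (P_i, P_{-i}) and c ≻ a ≻ b under (P'_i, P_{-i}). -/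
open scoped Classical

section SwitchAux

variable {N A : Type*}

/-- The empty partial preference. -/
def emptyPP (A : Type*) : PPref A :=
  ⟨fun _ _ => False, fun _ h => h, fun _ _ h => h.elim, fun _ _ _ h _ => h.elim⟩

lemma emptyPP_isEmpty : (emptyPP A).isEmptyPref := fun _ _ h => h

/-- A single-edge partial preference. -/
def edgeP (x y : A) (hxy : x ≠ y) : PPref A where
  rel u v := u = x ∧ v = y
  irrefl := by rintro a ⟨rfl, h⟩; exact hxy h
  antisymm := by rintro a b ⟨rfl, rfl⟩ ⟨h, -⟩; exact hxy h.symm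
  trans := by rintro a b c ⟨rfl, rfl⟩ ⟨h, -⟩; exact absurd h.symm hxy

lemma edgeP_rel {x y u v : A} {hxy : x ≠ y} :
    (edgeP x y hxy).rel u v ↔ (u = x ∧ v = y) := Iff.rfl

lemma edgeP_not_linear {x y w : A} (hxy : x ≠ y) (hxw : x ≠ w) (hwy : w ≠ y) :
    ¬ (edgeP x y hxy).isLinear := by
  intro h
  rcases h x w hxw with h' | h'
  · exact hwy h'.2
  · exact hxw h'.1.symm

/-- The "vee" partial preference `x ≻ y`, `z ≻ y`. -/
def veeP (x z y : A) (hxy : x ≠ y) (hzy : z ≠ y) : PPref A where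
  rel u v := (u = x ∨ u = z) ∧ v = y
  irrefl := by
    rintro a ⟨h, rfl⟩
    rcases h with h | h
    exacts [hxy h.symm, hzy h.symm]
  antisymm := by
    rintro a b ⟨h1, rfl⟩ ⟨h2, -⟩
    rcases h2 with h | h
    exacts [hxy h.symm, hzy h.symm]
  trans := by
    rintro a b c ⟨-, rfl⟩ ⟨h2, -⟩
    rcases h2 with h | h
    exacts [absurd h.symm hxy, absurd h.symm hzy]

lemma veeP_rel {x z y u v : A} {hxy : x ≠ y} {hzy : z ≠ y} :
    (veeP x z y hxy hzy).rel u v ↔ ((u = x ∨ u = z) ∧ v = y) := Iff.rfl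

lemma veeP_not_linear {x z y : A} (hxy : x ≠ y) (hzy : z ≠ y) (hxz : x ≠ z) :
    ¬ (veeP x z y hxy hzy).isLinear := by
  intro h
  rcases h x z hxz with h' | h'
  · exact hzy h'.2
  · exact hxy h'.2

/-- The linear order `x ≻ y ≻ z`. -/
def lin3 (x y z : A) (hxy : x ≠ y) (hxz : x ≠ z) (hyz : y ≠ z) : PPref A where
  rel u v := (u = x ∧ v = y) ∨ (u = x ∧ v = z) ∨ (u = y ∧ v = z)
  irrefl := by
    rintro a (⟨rfl, h⟩ | ⟨rfl, h⟩ | ⟨rfl, h⟩)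
    exacts [hxy h, hxz h, hyz h]
  antisymm := by
    rintro a b (⟨rfl, rfl⟩ | ⟨rfl, rfl⟩ | ⟨rfl, rfl⟩) (⟨e1, e2⟩ | ⟨e1, e2⟩ | ⟨e1, e2⟩) <;>
      first
        | exact hxy e2 | exact hxz e2 | exact hyz e2
        | exact hxy e1.symm | exact hxz e1.symm | exact hyz e1.symm
        | simp_all
  trans := by
    rintro a b c (⟨rfl, rfl⟩ | ⟨rfl, rfl⟩ | ⟨rfl, rfl⟩) (⟨e1, rfl⟩ | ⟨e1, rfl⟩ | ⟨e1, rfl⟩) <;>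
      simp_all

lemma lin3_rel {x y z u v : A} {hxy : x ≠ y} {hxz : x ≠ z} {hyz : y ≠ z} :
    (lin3 x y z hxy hxz hyz).rel u v ↔
      ((u = x ∧ v = y) ∨ (u = x ∧ v = z) ∨ (u = y ∧ v = z)) := Iff.rfl

lemma lin3_linear {x y z : A} (hxy : x ≠ y) (hxz : x ≠ z) (hyz : y ≠ z)
    (hcov : ∀ u : A, u = x ∨ u = y ∨ u = z) : (lin3 x y z hxy hxz hyz).isLinear := by
  intro u v huv
  rcases hcov u with rfl | rfl | rfl <;> rcases hcov v with rfl | rfl | rfl <;>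
    simp_all [lin3]

lemma agree_sub {P Q R : PPref A} (h : ∀ x y, P.rel x y → Q.rel x y → R.rel x y) :
    Agree P Q ⊆ Agree P R := fun p hp => ⟨hp.1, h _ _ hp.1 hp.2⟩

lemma disagree_sub {P Q R : PPref A} (h : ∀ x y, P.rel x y → R.rel y x → Q.rel y x) :
    Disagree P R ⊆ Disagree P Q := fun p hp => ⟨hp.1, h _ _ hp.1 hp.2⟩

/-- A linear order on the voters with `t` on top. -/
noncomputable def topOrder (N : Type*) [Fintype N] [DecidableEq N] (t : N) : LPref N := by
  classical
  refine ⟨⟨fun x y => x ≠ y ∧ (x = t ∨ (y ≠ t ∧ Fintype.equivFin N x < Fintype.equivFin N y)),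
    fun a h => h.1 rfl, ?_, ?_⟩, ?_⟩
  · rintro a b ⟨hab, h⟩ ⟨hba, h'⟩
    rcases h with rfl | ⟨hbt, hlt⟩
    · rcases h' with rfl | ⟨hat, -⟩
      · exact hab rfl
      · exact hat rfl
    · rcases h' with rfl | ⟨-, hlt'⟩
      · exact hbt rfl
      · exact absurd hlt' (not_lt.mpr hlt.le)
  · rintro a b c ⟨hab, h⟩ ⟨hbc, h'⟩
    rcases h with rfl | ⟨hbt, hlt⟩
    · refine ⟨?_, Or.inl rfl⟩
      rcases h' with rfl | ⟨hct, -⟩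
      · exact absurd rfl hab
      · exact fun he => hct he.symm
    · rcases h' with rfl | ⟨hct, hlt'⟩
      · exact absurd rfl hbt
      · have h3 := hlt.trans hlt'
        refine ⟨fun he => ?_, Or.inr ⟨hct, h3⟩⟩
        rw [he] at h3
        exact lt_irrefl _ h3
  · intro a b hab
    by_cases hat : a = t
    · exact Or.inl ⟨hab, Or.inl hat⟩
    · by_cases hbt : b = t
      · exact Or.inr ⟨Ne.symm hab, Or.inl hbt⟩
      · rcases lt_trichotomy (Fintype.equivFin N a) (Fintype.equivFin N b) with h | h | h
        · exact Or.inl ⟨hab, Or.inr ⟨hbt, h⟩⟩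
        · exact absurd ((Fintype.equivFin N).injective h) hab
        · exact Or.inr ⟨Ne.symm hab, Or.inr ⟨hat, h⟩⟩

lemma topOrder_top {N : Type*} [Fintype N] [DecidableEq N] {t w : N} (h : w ≠ t) :
    (topOrder N t).1.rel t w := ⟨Ne.symm h, Or.inl rfl⟩

lemma finset_exists_top {N : Type*} [DecidableEq N] (L : PPref N) (hL : L.isLinear) :
    ∀ s : Finset N, s.Nonempty → ∃ m ∈ s, ∀ w ∈ s, w ≠ m → L.rel m w := by
  intro s
  induction s using Finset.induction_on with
  | empty => intro h; simp at h
  | @insert a s ha ih =>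
    intro _
    rcases s.eq_empty_or_nonempty with rfl | hs
    · refine ⟨a, by simp, ?_⟩
      intro w hw hwa
      simp at hw
      exact absurd hw hwa
    · obtain ⟨m, hm, hmax⟩ := ih hs
      have ham : a ≠ m := fun h => ha (h ▸ hm)
      rcases hL a m ham with h | h
      · refine ⟨a, Finset.mem_insert_self _ _, ?_⟩
        intro w hw hwa
        rcases Finset.mem_insert.1 hw with rfl | hw'
        · exact absurd rfl hwa
        · by_cases hwm : w = m
          · subst hwm; exact h
          · exact L.trans _ _ _ h (hmax w hw' hwm)
      · refine ⟨m, Finset.mem_insert_of_mem hm, ?_⟩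
        intro w hw hwm
        rcases Finset.mem_insert.1 hw with rfl | hw'
        · exact h
        · exact hmax w hw' hwm

lemma set_exists_top {N : Type*} [Fintype N] [DecidableEq N] (L : PPref N) (hL : L.isLinear)
    (G : Set N) (hG : G.Nonempty) : ∃ m ∈ G, ∀ w ∈ G, w ≠ m → L.rel m w := by
  have hfin := Set.toFinite G
  obtain ⟨m, hm, hmax⟩ := finset_exists_top L hL hfin.toFinset
    (by rwa [Set.Finite.toFinset_nonempty])
  exact ⟨m, (Set.Finite.mem_toFinset hfin).mp hm,
    fun w hw hwm => hmax w ((Set.Finite.mem_toFinset hfin).mpr hw) hwm⟩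

section ProxyLemmas

variable {g : (N → PPref A) → N → Set N} {P : N → PPref A} {S : N → LPref N} {D : N → LPref A}

lemma proxyOf_self {i : N} (h : g P i = {i} ∨ g P i = ∅) : proxyOf g P S i = i := by
  unfold proxyOf; rw [if_pos h]

lemma proxyOf_top {i t : N} (ht : t ∈ g P i) (hti : t ≠ i)
    (htop : ∀ w, w ≠ t → (S i).1.rel t w) : proxyOf g P S i = t := by
  have hne : ¬(g P i = {i} ∨ g P i = ∅) := by
    rintro (h | h) <;> rw [h] at ht
    · exact hti ht
    · exact ht
  have hex : ∃ j ∈ g P i, ∀ k ∈ g P i, k ≠ j → (S i).1.rel j k :=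
    ⟨t, ht, fun w _ hw => htop w hw⟩
  unfold proxyOf
  rw [if_neg hne, dif_pos hex]
  by_contra hct
  exact (S i).1.antisymm _ _ (htop _ hct) (hex.choose_spec.2 t ht (Ne.symm hct))

lemma proxyOf_mem [Fintype N] [DecidableEq N] {i : N} (hi : i ∉ g P i) (hne : g P i ≠ ∅) :
    proxyOf g P S i ∈ g P i := by
  have hG : (g P i).Nonempty := Set.nonempty_iff_ne_empty.mpr hne
  have hne' : ¬(g P i = {i} ∨ g P i = ∅) := by
    rintro (h | h)
    · rw [h] at hi; exact hi rfl
    · exact hne h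
  obtain ⟨m, hm, hmax⟩ := set_exists_top (S i).1 (S i).2 _ hG
  have hex : ∃ j ∈ g P i, ∀ k ∈ g P i, k ≠ j → (S i).1.rel j k :=
    ⟨m, hm, fun w hw hwm => hmax w hw hwm⟩
  unfold proxyOf
  rw [if_neg hne', dif_pos hex]
  exact hex.choose_spec.1

lemma gurus_delegate [Fintype N] (hg : IsProxyMech g) {i m : N}
    (him : proxyOf g P S i = m) (hlin : (P m).isLinear) (D : N → LPref A) :
    gurus g P S D i = ⟨P m, hlin⟩ := by
  have hmm : proxyOf g P S m = m := proxyOf_self (Or.inl (hg.2.1 P m hlin))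
  have hpos : 0 < Fintype.card N := @Fintype.card_pos _ _ ⟨i⟩
  obtain ⟨n, hn⟩ := Nat.exists_eq_succ_of_ne_zero hpos.ne'
  have ht : (proxyOf g P S)^[Fintype.card N] i = m := by
    rw [hn, Function.iterate_succ_apply, him, Function.iterate_fixed hmm]
  simp only [gurus]
  rw [ht, if_pos hmm]; exact dif_pos hlin

lemma gurus_delegate_val [Fintype N] (hg : IsProxyMech g) {i m : N}
    (him : proxyOf g P S i = m) (hlin : (P m).isLinear) (D : N → LPref A) :
    (gurus g P S D i).1 = P m := by
  rw [gurus_delegate hg him hlin D]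

lemma gurus_default [Fintype N] {i : N} (hii : proxyOf g P S i = i)
    (hnl : ¬(P i).isLinear) (D : N → LPref A) : gurus g P S D i = D i := by
  have ht : (proxyOf g P S)^[Fintype.card N] i = i := Function.iterate_fixed hii _
  simp only [gurus]
  rw [ht, if_pos hii]; exact dif_neg hnl

end ProxyLemmas

end SwitchAux

section SwitchCases

/-- The conclusion of the guru switch lemma, for a fixed voter and labelling. -/
abbrev SwitchAt {N A : Type*} [Fintype N] [DecidableEq N]
    (g : (N → PPref A) → N → Set N) (i : N) (a b c : A) : Prop :=
  a ≠ b ∧ a ≠ c ∧ b ≠ c ∧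
  ∃ (P : N → PPref A) (Pi' : PPref A) (S : N → LPref N) (D : N → LPref A),
    (∀ j, (P j).subsetOf (D j).1) ∧ Pi'.subsetOf (D i).1 ∧
    ((∀ x y, Pi'.rel x y ↔ ((P i).rel x y ∨ (x = a ∧ y = b))) ∨
     (∀ x y, Pi'.rel x y ↔ ((P i).rel x y ∧ ¬ (x = b ∧ y = a)))) ∧
    (gurus g P S D i).1.rel b a ∧ (gurus g P S D i).1.rel a c ∧
    (gurus g (Function.update P i Pi') S D i).1.rel c a ∧
    (gurus g (Function.update P i Pi') S D i).1.rel a b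

lemma switch_case1 {N A : Type*} [Fintype N] [DecidableEq N]
    {a₀ b₀ c₀ : A} (h₁ : a₀ ≠ b₀) (h₂ : a₀ ≠ c₀) (h₃ : b₀ ≠ c₀)
    (hA : ∀ x : A, x = a₀ ∨ x = b₀ ∨ x = c₀)
    {i j : N} (hji : j ≠ i)
    {g : (N → PPref A) → N → Set N} (hg : IsProxyMech g) (hIIP : IIP g)
    (hjm : j ∉ g (fun m => if m = i then edgeP a₀ b₀ h₁
      else if m = j then lin3 b₀ a₀ c₀ (Ne.symm h₁) h₃ h₂
      else lin3 c₀ a₀ b₀ (Ne.symm h₂) (Ne.symm h₃) h₁) i) :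
    SwitchAt g i a₀ b₀ c₀ := by
  classical
  have covbac : ∀ u : A, u = b₀ ∨ u = a₀ ∨ u = c₀ := fun u => by rcases hA u with h|h|h <;> tauto
  have covcab : ∀ u : A, u = c₀ ∨ u = a₀ ∨ u = b₀ := fun u => by rcases hA u with h|h|h <;> tauto
  have hLBLin : (lin3 b₀ a₀ c₀ (Ne.symm h₁) h₃ h₂).isLinear := lin3_linear _ _ _ covbac
  have hLCLin : (lin3 c₀ a₀ b₀ (Ne.symm h₂) (Ne.symm h₃) h₁).isLinear := lin3_linear _ _ _ covcab
  set LB : PPref A := lin3 b₀ a₀ c₀ (Ne.symm h₁) h₃ h₂ with hLB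
  set LC : PPref A := lin3 c₀ a₀ b₀ (Ne.symm h₂) (Ne.symm h₃) h₁ with hLC
  set P : N → PPref A := fun m => if m = i then emptyPP A else if m = j then LB else LC with hP
  set S : N → LPref N := fun _ => topOrder N j with hS
  set D : N → LPref A := fun m => if m = j then ⟨LB, hLBLin⟩ else ⟨LC, hLCLin⟩ with hD
  have hPi : P i = emptyPP A := by rw [hP]; simp
  have hPj : P j = LB := by rw [hP]; simp [hji]
  have hPm : ∀ m, m ≠ i → m ≠ j → P m = LC := fun m hmi hmj => by rw [hP]; simp [hmi, hmj]
  have hDi : D i = ⟨LC, hLCLin⟩ := by rw [hD]; simp [Ne.symm hji]; rfl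
  have hDj : D j = ⟨LB, hLBLin⟩ := by rw [hD]; simp; rfl
  -- base profile: `i` has the empty preference, so delegates to `j`
  have hgPi : g P i = {m | m ≠ i} := hg.1 P i (by rw [hPi]; exact emptyPP_isEmpty)
  have hjlin : (P j).isLinear := by rw [hPj]; exact hLBLin
  have hdel : proxyOf g P S i = j :=
    proxyOf_top (by rw [hgPi]; exact hji) hji (fun w hw => by rw [hS]; exact topOrder_top hw)
  have hbase : (gurus g P S D i).1 = LB := by
    rw [gurus_delegate_val hg hdel hjlin D, hPj]
  -- updated profile
  have hout : (gurus g (Function.update P i (edgeP a₀ b₀ h₁)) S D i).1 = LC := by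
    set P' : N → PPref A := Function.update P i (edgeP a₀ b₀ h₁) with hP'
    have hP'i : P' i = edgeP a₀ b₀ h₁ := by rw [hP']; simp
    have hP'j : P' j = LB := by rw [hP', Function.update_of_ne hji, hPj]
    have hnl : ¬ (P' i).isLinear := by
      rw [hP'i]; exact edgeP_not_linear h₁ h₂ (Ne.symm h₃)
    have hiP' : i ∉ g P' i := hg.2.2 P' i hnl
    have hjm' : j ∉ g P' i := by
      intro hmem
      exact hjm ((hIIP P' _ i j (by rw [hP'i]; simp) (by rw [hP'j]; simp [hji])).mp hmem)
    by_cases hGe : g P' i = ∅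
    · rw [gurus_default (proxyOf_self (Or.inr hGe)) hnl D, hDi]
    · have hmem := proxyOf_mem (S := S) hiP' hGe
      have hmi : proxyOf g P' S i ≠ i := by intro h; rw [h] at hmem; exact hiP' hmem
      have hmj : proxyOf g P' S i ≠ j := by intro h; rw [h] at hmem; exact hjm' hmem
      have hmv : P' (proxyOf g P' S i) = LC := by
        rw [hP', Function.update_of_ne hmi, hPm _ hmi hmj]
      have hml : (P' (proxyOf g P' S i)).isLinear := by rw [hmv]; exact hLCLin
      rw [gurus_delegate_val hg rfl hml D, hmv]
  refine ⟨h₁, h₂, h₃, P, edgeP a₀ b₀ h₁, S, D, ?_, ?_, ?_, ?_, ?_, ?_, ?_⟩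
  · intro m x y hxy
    by_cases hmi : m = i
    · rw [hmi, hPi] at hxy; exact False.elim hxy
    · by_cases hmj : m = j
      · rw [hmj, hPj] at hxy; rw [hmj, hDj]; exact hxy
      · rw [hPm m hmi hmj] at hxy
        have hDm : D m = ⟨LC, hLCLin⟩ := by rw [hD]; simp [hmj]; rfl
        rw [hDm]; exact hxy
  · intro x y hxy
    rw [edgeP_rel] at hxy
    obtain ⟨rfl, rfl⟩ := hxy
    rw [hDi]
    exact Or.inr (Or.inr ⟨rfl, rfl⟩)
  · refine Or.inl fun x y => ?_
    rw [hPi]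
    constructor
    · intro h; exact Or.inr h
    · rintro (h | h)
      · exact False.elim h
      · exact h
  · rw [hbase]; exact Or.inl ⟨rfl, rfl⟩
  · rw [hbase]; exact Or.inr (Or.inr ⟨rfl, rfl⟩)
  · rw [hout]; exact Or.inl ⟨rfl, rfl⟩
  · rw [hout]; exact Or.inr (Or.inr ⟨rfl, rfl⟩)

lemma switch_case2 {N A : Type*} [Fintype N] [DecidableEq N]
    {a₀ b₀ c₀ : A} (h₁ : a₀ ≠ b₀) (h₂ : a₀ ≠ c₀) (h₃ : b₀ ≠ c₀)
    (hA : ∀ x : A, x = a₀ ∨ x = b₀ ∨ x = c₀)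
    {i j k : N} (hji : j ≠ i) (hki : k ≠ i) (hkj : k ≠ j)
    {g : (N → PPref A) → N → Set N} (hg : IsProxyMech g) (hPM : PM g) (hIIP : IIP g)
    (hjm : j ∈ g (fun m => if m = i then edgeP a₀ b₀ h₁
      else if m = j then lin3 b₀ a₀ c₀ (Ne.symm h₁) h₃ h₂
      else lin3 c₀ a₀ b₀ (Ne.symm h₂) (Ne.symm h₃) h₁) i)
    (hkm : k ∉ g (fun m => if m = i then veeP a₀ c₀ b₀ h₁ (Ne.symm h₃)
      else if m = k then lin3 b₀ c₀ a₀ h₃ (Ne.symm h₁) (Ne.symm h₂)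
      else lin3 a₀ c₀ b₀ h₂ h₁ (Ne.symm h₃)) i) :
    SwitchAt g i c₀ b₀ a₀ := by
  classical
  have covbac : ∀ u : A, u = b₀ ∨ u = a₀ ∨ u = c₀ := fun u => by rcases hA u with h|h|h <;> tauto
  have covbca : ∀ u : A, u = b₀ ∨ u = c₀ ∨ u = a₀ := fun u => by rcases hA u with h|h|h <;> tauto
  have covacb : ∀ u : A, u = a₀ ∨ u = c₀ ∨ u = b₀ := fun u => by rcases hA u with h|h|h <;> tauto
  have hLBLin : (lin3 b₀ a₀ c₀ (Ne.symm h₁) h₃ h₂).isLinear := lin3_linear _ _ _ covbac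
  have hLKLin : (lin3 b₀ c₀ a₀ h₃ (Ne.symm h₁) (Ne.symm h₂)).isLinear := lin3_linear _ _ _ covbca
  have hLALin : (lin3 a₀ c₀ b₀ h₂ h₁ (Ne.symm h₃)).isLinear := lin3_linear _ _ _ covacb
  set LB : PPref A := lin3 b₀ a₀ c₀ (Ne.symm h₁) h₃ h₂ with hLB
  set LK : PPref A := lin3 b₀ c₀ a₀ h₃ (Ne.symm h₁) (Ne.symm h₂) with hLK
  set LA : PPref A := lin3 a₀ c₀ b₀ h₂ h₁ (Ne.symm h₃) with hLA
  set V : PPref A := veeP a₀ c₀ b₀ h₁ (Ne.symm h₃) with hV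
  set Q : PPref A := edgeP a₀ b₀ h₁ with hQ
  set P : N → PPref A := fun m => if m = i then Q else if m = j then LB
    else if m = k then LK else LA with hP
  set S : N → LPref N := fun _ => topOrder N k with hS
  set D : N → LPref A := fun m => if m = i then ⟨LA, hLALin⟩ else if m = j then ⟨LB, hLBLin⟩
    else if m = k then ⟨LK, hLKLin⟩ else ⟨LA, hLALin⟩ with hD
  have hPi : P i = Q := by rw [hP]; simp
  have hPj : P j = LB := by rw [hP]; simp [hji]
  have hPk : P k = LK := by rw [hP]; simp [hki, hkj]
  have hPm : ∀ m, m ≠ i → m ≠ j → m ≠ k → P m = LA := fun m hmi hmj hmk => by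
    rw [hP]; simp [hmi, hmj, hmk]
  have hDi : D i = ⟨LA, hLALin⟩ := by rw [hD]; simp; rfl
  have hDj : D j = ⟨LB, hLBLin⟩ := by rw [hD]; simp [hji]; rfl
  have hDk : D k = ⟨LK, hLKLin⟩ := by rw [hD]; simp [hki, hkj]; rfl
  -- base profile: `j` is an accepted proxy, hence by PM so is `k`; `i` delegates to `k`
  have hjP : j ∈ g P i :=
    (hIIP P _ i j (by rw [hPi, hQ]; simp) (by rw [hPj, hLB]; simp [hji])).mpr hjm
  have hkP : k ∈ g P i := by
    refine hPM P i j k hjP hji hki ?_ ?_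
    · rw [hPi, hPj, hPk]
      refine agree_sub ?_
      intro x y hxy h2
      rw [hQ, edgeP_rel] at hxy
      obtain ⟨rfl, rfl⟩ := hxy
      rw [hLB] at h2
      rcases h2 with ⟨e1, e2⟩ | ⟨e1, e2⟩ | ⟨e1, e2⟩
      exacts [absurd e1 h₁, absurd e1 h₁, absurd e2 h₃]
    · rw [hPi, hPj, hPk]
      refine disagree_sub ?_
      intro x y hxy _
      rw [hQ, edgeP_rel] at hxy
      obtain ⟨rfl, rfl⟩ := hxy
      rw [hLB]
      exact Or.inl ⟨rfl, rfl⟩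
  have hklin : (P k).isLinear := by rw [hPk]; exact hLKLin
  have hdel : proxyOf g P S i = k :=
    proxyOf_top hkP hki (fun w hw => by rw [hS]; exact topOrder_top hw)
  have hbase : (gurus g P S D i).1 = LK := by
    rw [gurus_delegate_val hg hdel hklin D, hPk]
  -- updated profile
  have hout : (gurus g (Function.update P i V) S D i).1 = LA := by
    set P' : N → PPref A := Function.update P i V with hP'
    have hP'i : P' i = V := by rw [hP']; simp
    have hP'j : P' j = LB := by rw [hP', Function.update_of_ne hji, hPj]
    have hP'k : P' k = LK := by rw [hP', Function.update_of_ne hki, hPk]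
    have hnl : ¬ (P' i).isLinear := by
      rw [hP'i, hV]; exact veeP_not_linear h₁ (Ne.symm h₃) h₂
    have hiP' : i ∉ g P' i := hg.2.2 P' i hnl
    have hkP' : k ∉ g P' i := by
      intro hmem
      exact hkm ((hIIP P' _ i k (by rw [hP'i, hV]; simp)
        (by rw [hP'k, hLK]; simp [hki])).mp hmem)
    have hjP' : j ∉ g P' i := by
      intro hmem
      refine hkP' (hPM P' i j k hmem hji hki ?_ ?_)
      · rw [hP'i, hP'j, hP'k]
        refine agree_sub ?_
        intro x y hxy h2
        rw [hV, veeP_rel] at hxy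
        obtain ⟨hx, rfl⟩ := hxy
        rw [hLB] at h2
        rcases hx with rfl | rfl <;> rcases h2 with ⟨e1, e2⟩ | ⟨e1, e2⟩ | ⟨e1, e2⟩ <;>
          first
            | exact absurd e1 h₁ | exact absurd e2 h₃
            | exact absurd e1.symm h₃ | exact absurd e1.symm h₂
      · rw [hP'i, hP'j, hP'k]
        refine disagree_sub ?_
        intro x y hxy _
        rw [hV, veeP_rel] at hxy
        obtain ⟨hx, rfl⟩ := hxy
        rw [hLB]
        rcases hx with rfl | rfl
        exacts [Or.inl ⟨rfl, rfl⟩, Or.inr (Or.inl ⟨rfl, rfl⟩)]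
    by_cases hGe : g P' i = ∅
    · rw [gurus_default (proxyOf_self (Or.inr hGe)) hnl D, hDi]
    · have hmem := proxyOf_mem (S := S) hiP' hGe
      have hmi : proxyOf g P' S i ≠ i := by intro h; rw [h] at hmem; exact hiP' hmem
      have hmj : proxyOf g P' S i ≠ j := by intro h; rw [h] at hmem; exact hjP' hmem
      have hmk : proxyOf g P' S i ≠ k := by intro h; rw [h] at hmem; exact hkP' hmem
      have hmv : P' (proxyOf g P' S i) = LA := by
        rw [hP', Function.update_of_ne hmi, hPm _ hmi hmj hmk]
      have hml : (P' (proxyOf g P' S i)).isLinear := by rw [hmv]; exact hLALin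
      rw [gurus_delegate_val hg rfl hml D, hmv]
  refine ⟨Ne.symm h₃, Ne.symm h₂, Ne.symm h₁, P, V, S, D, ?_, ?_, ?_, ?_, ?_, ?_, ?_⟩
  · intro m x y hxy
    by_cases hmi : m = i
    · rw [hmi, hPi, hQ, edgeP_rel] at hxy
      obtain ⟨rfl, rfl⟩ := hxy
      rw [hmi, hDi]
      exact Or.inr (Or.inl ⟨rfl, rfl⟩)
    · by_cases hmj : m = j
      · rw [hmj, hPj] at hxy; rw [hmj, hDj]; exact hxy
      · by_cases hmk : m = k
        · rw [hmk, hPk] at hxy; rw [hmk, hDk]; exact hxy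
        · rw [hPm m hmi hmj hmk] at hxy
          have hDm : D m = ⟨LA, hLALin⟩ := by rw [hD]; simp [hmi, hmj, hmk]; rfl
          rw [hDm]; exact hxy
  · intro x y hxy
    rw [hV, veeP_rel] at hxy
    obtain ⟨hx, rfl⟩ := hxy
    rw [hDi]
    rcases hx with rfl | rfl
    exacts [Or.inr (Or.inl ⟨rfl, rfl⟩), Or.inr (Or.inr ⟨rfl, rfl⟩)]
  · refine Or.inl fun x y => ?_
    rw [hPi, hQ, hV]
    constructor
    · intro h
      obtain ⟨hx, rfl⟩ := h
      rcases hx with rfl | rfl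
      exacts [Or.inl ⟨rfl, rfl⟩, Or.inr ⟨rfl, rfl⟩]
    · rintro (h | ⟨rfl, rfl⟩)
      · obtain ⟨rfl, rfl⟩ := h
        exact ⟨Or.inl rfl, rfl⟩
      · exact ⟨Or.inr rfl, rfl⟩
  · rw [hbase]; exact Or.inl ⟨rfl, rfl⟩
  · rw [hbase]; exact Or.inr (Or.inr ⟨rfl, rfl⟩)
  · rw [hout]; exact Or.inl ⟨rfl, rfl⟩
  · rw [hout]; exact Or.inr (Or.inr ⟨rfl, rfl⟩)

lemma switch_case3 {N A : Type*} [Fintype N] [DecidableEq N]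
    {a₀ b₀ c₀ : A} (h₁ : a₀ ≠ b₀) (h₂ : a₀ ≠ c₀) (h₃ : b₀ ≠ c₀)
    (hA : ∀ x : A, x = a₀ ∨ x = b₀ ∨ x = c₀)
    {i j k : N} (hji : j ≠ i) (hki : k ≠ i) (hkj : k ≠ j)
    {g : (N → PPref A) → N → Set N} (hg : IsProxyMech g) (hPM : PM g) (hIIP : IIP g)
    (hkm : k ∈ g (fun m => if m = i then veeP a₀ c₀ b₀ h₁ (Ne.symm h₃)
      else if m = k then lin3 b₀ c₀ a₀ h₃ (Ne.symm h₁) (Ne.symm h₂)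
      else lin3 a₀ c₀ b₀ h₂ h₁ (Ne.symm h₃)) i) :
    SwitchAt g i a₀ c₀ b₀ := by
  classical
  have covbac : ∀ u : A, u = b₀ ∨ u = a₀ ∨ u = c₀ := fun u => by rcases hA u with h|h|h <;> tauto
  have covbca : ∀ u : A, u = b₀ ∨ u = c₀ ∨ u = a₀ := fun u => by rcases hA u with h|h|h <;> tauto
  have covacb : ∀ u : A, u = a₀ ∨ u = c₀ ∨ u = b₀ := fun u => by rcases hA u with h|h|h <;> tauto
  have covcab : ∀ u : A, u = c₀ ∨ u = a₀ ∨ u = b₀ := fun u => by rcases hA u with h|h|h <;> tauto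
  have hLBLin : (lin3 b₀ a₀ c₀ (Ne.symm h₁) h₃ h₂).isLinear := lin3_linear _ _ _ covbac
  have hLKLin : (lin3 b₀ c₀ a₀ h₃ (Ne.symm h₁) (Ne.symm h₂)).isLinear := lin3_linear _ _ _ covbca
  have hLALin : (lin3 a₀ c₀ b₀ h₂ h₁ (Ne.symm h₃)).isLinear := lin3_linear _ _ _ covacb
  have hLCLin : (lin3 c₀ a₀ b₀ (Ne.symm h₂) (Ne.symm h₃) h₁).isLinear := lin3_linear _ _ _ covcab
  set LB : PPref A := lin3 b₀ a₀ c₀ (Ne.symm h₁) h₃ h₂ with hLB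
  set LK : PPref A := lin3 b₀ c₀ a₀ h₃ (Ne.symm h₁) (Ne.symm h₂) with hLK
  set LA : PPref A := lin3 a₀ c₀ b₀ h₂ h₁ (Ne.symm h₃) with hLA
  set LC : PPref A := lin3 c₀ a₀ b₀ (Ne.symm h₂) (Ne.symm h₃) h₁ with hLC
  set V : PPref A := veeP a₀ c₀ b₀ h₁ (Ne.symm h₃) with hV
  set P : N → PPref A := fun m => if m = i then LC else if m = j then LB
    else if m = k then LK else LA with hP
  set S : N → LPref N := fun _ => topOrder N j with hS
  set D : N → LPref A := fun m => if m = i then ⟨LC, hLCLin⟩ else if m = j then ⟨LB, hLBLin⟩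
    else if m = k then ⟨LK, hLKLin⟩ else ⟨LA, hLALin⟩ with hD
  have hPi : P i = LC := by rw [hP]; simp
  have hPj : P j = LB := by rw [hP]; simp [hji]
  have hPk : P k = LK := by rw [hP]; simp [hki, hkj]
  have hDi : D i = ⟨LC, hLCLin⟩ := by rw [hD]; simp; rfl
  have hDj : D j = ⟨LB, hLBLin⟩ := by rw [hD]; simp [hji]; rfl
  have hDk : D k = ⟨LK, hLKLin⟩ := by rw [hD]; simp [hki, hkj]; rfl
  -- base profile: `i` has a linear order and votes directly
  have hilin : (P i).isLinear := by rw [hPi]; exact hLCLin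
  have hdel : proxyOf g P S i = i := proxyOf_self (Or.inl (hg.2.1 P i hilin))
  have hbase : (gurus g P S D i).1 = LC := by
    rw [gurus_delegate_val hg hdel hilin D, hPi]
  -- updated profile: `k` is accepted, hence by PM so is `j`; `i` delegates to `j`
  have hout : (gurus g (Function.update P i V) S D i).1 = LB := by
    set P' : N → PPref A := Function.update P i V with hP'
    have hP'i : P' i = V := by rw [hP']; simp
    have hP'j : P' j = LB := by rw [hP', Function.update_of_ne hji, hPj]
    have hP'k : P' k = LK := by rw [hP', Function.update_of_ne hki, hPk]
    have hkP' : k ∈ g P' i :=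
      (hIIP P' _ i k (by rw [hP'i, hV]; simp) (by rw [hP'k, hLK]; simp [hki])).mpr hkm
    have hjP' : j ∈ g P' i := by
      refine hPM P' i k j hkP' hki hji ?_ ?_
      · rw [hP'i, hP'j, hP'k]
        refine agree_sub ?_
        intro x y hxy h2
        rw [hV, veeP_rel] at hxy
        obtain ⟨hx, rfl⟩ := hxy
        rw [hLK] at h2
        rcases hx with rfl | rfl <;> rcases h2 with ⟨e1, e2⟩ | ⟨e1, e2⟩ | ⟨e1, e2⟩ <;>
          first
            | exact absurd e1 h₁ | exact absurd e1 h₂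
            | exact absurd e1.symm h₃ | exact absurd e2.symm h₁
      · rw [hP'i, hP'j, hP'k]
        refine disagree_sub ?_
        intro x y hxy _
        rw [hV, veeP_rel] at hxy
        obtain ⟨hx, rfl⟩ := hxy
        rw [hLK]
        rcases hx with rfl | rfl
        exacts [Or.inr (Or.inl ⟨rfl, rfl⟩), Or.inl ⟨rfl, rfl⟩]
    have hjlin : (P' j).isLinear := by rw [hP'j]; exact hLBLin
    have hdel' : proxyOf g P' S i = j :=
      proxyOf_top hjP' hji (fun w hw => by rw [hS]; exact topOrder_top hw)
    rw [gurus_delegate_val hg hdel' hjlin D, hP'j]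
  refine ⟨h₂, h₁, Ne.symm h₃, P, V, S, D, ?_, ?_, ?_, ?_, ?_, ?_, ?_⟩
  · intro m x y hxy
    by_cases hmi : m = i
    · rw [hmi, hPi] at hxy; rw [hmi, hDi]; exact hxy
    · by_cases hmj : m = j
      · rw [hmj, hPj] at hxy; rw [hmj, hDj]; exact hxy
      · by_cases hmk : m = k
        · rw [hmk, hPk] at hxy; rw [hmk, hDk]; exact hxy
        · have hPm : P m = LA := by rw [hP]; simp [hmi, hmj, hmk]
          rw [hPm] at hxy
          have hDm : D m = ⟨LA, hLALin⟩ := by rw [hD]; simp [hmi, hmj, hmk]; rfl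
          rw [hDm]; exact hxy
  · intro x y hxy
    rw [hV, veeP_rel] at hxy
    obtain ⟨hx, rfl⟩ := hxy
    rw [hDi]
    rcases hx with rfl | rfl
    exacts [Or.inr (Or.inr ⟨rfl, rfl⟩), Or.inr (Or.inl ⟨rfl, rfl⟩)]
  · refine Or.inr fun x y => ?_
    rw [hPi, hV, hLC]
    constructor
    · intro h
      obtain ⟨hx, rfl⟩ := h
      rcases hx with rfl | rfl
      · exact ⟨Or.inr (Or.inr ⟨rfl, rfl⟩), fun hc => h₂ hc.1⟩
      · exact ⟨Or.inr (Or.inl ⟨rfl, rfl⟩), fun hc => h₁ hc.2.symm⟩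
    · rintro ⟨h, hn⟩
      rcases h with ⟨rfl, rfl⟩ | ⟨rfl, rfl⟩ | ⟨rfl, rfl⟩
      · exact absurd ⟨rfl, rfl⟩ hn
      · exact ⟨Or.inr rfl, rfl⟩
      · exact ⟨Or.inl rfl, rfl⟩
  · rw [hbase]; exact Or.inl ⟨rfl, rfl⟩
  · rw [hbase]; exact Or.inr (Or.inr ⟨rfl, rfl⟩)
  · rw [hout]; exact Or.inl ⟨rfl, rfl⟩
  · rw [hout]; exact Or.inr (Or.inr ⟨rfl, rfl⟩)

end SwitchCases

/-- With three alternatives and at least three voters, for any proxy mechanism satisfying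
PM and IIP there are a voter `i`, alternatives `a, b, c`, and a proxy vote profile such
that adding the edge `a ≻ b` to (or deleting the edge `b ≻ a` from) `i`'s partial order
switches the vote cast by `i`'s guru from `b ≻ a ≻ c` to `c ≻ a ≻ b`. -/
theorem guru_switch_lemma {N A : Type*} [Fintype N] [DecidableEq N]
    (a₀ b₀ c₀ : A) (h₁ : a₀ ≠ b₀) (h₂ : a₀ ≠ c₀) (h₃ : b₀ ≠ c₀)
    (hA : ∀ x : A, x = a₀ ∨ x = b₀ ∨ x = c₀)
    (hN : 3 ≤ Fintype.card N)
    (g : (N → PPref A) → N → Set N) (hg : IsProxyMech g)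
    (hPM : PM g) (hIIP : IIP g) :
    ∃ (i : N) (a b c : A), a ≠ b ∧ a ≠ c ∧ b ≠ c ∧
      ∃ (P : N → PPref A) (Pi' : PPref A) (S : N → LPref N) (D : N → LPref A),
        (∀ j, (P j).subsetOf (D j).1) ∧ Pi'.subsetOf (D i).1 ∧
        ((∀ x y, Pi'.rel x y ↔ ((P i).rel x y ∨ (x = a ∧ y = b))) ∨
         (∀ x y, Pi'.rel x y ↔ ((P i).rel x y ∧ ¬ (x = b ∧ y = a)))) ∧
        (gurus g P S D i).1.rel b a ∧ (gurus g P S D i).1.rel a c ∧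
        (gurus g (Function.update P i Pi') S D i).1.rel c a ∧
        (gurus g (Function.update P i Pi') S D i).1.rel a b := by
  classical
  have hpos : 0 < Fintype.card N := by omega
  have hne : Nonempty N := Fintype.card_pos_iff.mp hpos
  obtain ⟨i⟩ := hne
  obtain ⟨j, hji⟩ := Fintype.exists_ne_of_one_lt_card (by omega) i
  obtain ⟨k, hki, hkj⟩ : ∃ k : N, k ≠ i ∧ k ≠ j := by
    by_contra hcon
    push_neg at hcon
    have hsub : (Finset.univ : Finset N) ⊆ {i, j} := by
      intro x _
      simp only [Finset.mem_insert, Finset.mem_singleton]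
      rcases eq_or_ne x i with h | h
      · exact Or.inl h
      · exact Or.inr (hcon x h)
    have hc1 := Finset.card_le_card hsub
    have hc2 : ({i, j} : Finset N).card ≤ 2 :=
      (Finset.card_insert_le _ _).trans (by simp)
    rw [Finset.card_univ] at hc1
    omega
  by_cases hk3 : k ∈ g (fun m => if m = i then veeP a₀ c₀ b₀ h₁ (Ne.symm h₃)
      else if m = k then lin3 b₀ c₀ a₀ h₃ (Ne.symm h₁) (Ne.symm h₂)
      else lin3 a₀ c₀ b₀ h₂ h₁ (Ne.symm h₃)) i
  · exact ⟨i, a₀, c₀, b₀, switch_case3 h₁ h₂ h₃ hA hji hki hkj hg hPM hIIP hk3⟩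
  by_cases hj2 : j ∈ g (fun m => if m = i then edgeP a₀ b₀ h₁
      else if m = j then lin3 b₀ a₀ c₀ (Ne.symm h₁) h₃ h₂
      else lin3 c₀ a₀ b₀ (Ne.symm h₂) (Ne.symm h₃) h₁) i
  · exact ⟨i, c₀, b₀, a₀, switch_case2 h₁ h₂ h₃ hA hji hki hkj hg hPM hIIP hj2 hk3⟩
  · exact ⟨i, a₀, b₀, c₀, switch_case1 h₁ h₂ h₃ hA hji hg hIIP hj2⟩
end

section
/- If f is IIA-manipulable over n voters and m alternatives and f is Uniform Voter Addition Invariant, then (f, SUBSET) is proxy-choice manipulable over n + m! voters and m alternatives. -/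
open scoped Classical

/-- Proxy-choice manipulability of a pair `(f, g)`: some voter `i` strictly prefers (per
her own partial order) the outcome obtained by changing only her proxy ranking. -/
def PCManip {N A : Type*} [Fintype N] (f : (N → LPref A) → A)
    (g : (N → PPref A) → N → Set N) : Prop :=
  ∃ (P : N → PPref A) (S S' : N → LPref N) (D : N → LPref A) (i : N),
    (∀ j, j ≠ i → S' j = S j) ∧
    (P i).rel (f (gurus g P S' D)) (f (gurus g P S D))

/-- IIA-manipulability of `f`: some voter can reverse the social ranking of two
alternatives while maintaining her own ranking of them. -/
def IIAManip {N A : Type*} [DecidableEq N] (f : (N → LPref A) → A) : Prop :=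
  ∃ (L : N → LPref A) (i : N) (Li' : LPref A), Li' ≠ L i ∧
    (L i).1.rel (f (Function.update L i Li')) (f L) ∧
    Li'.1.rel (f (Function.update L i Li')) (f L)

section Aux

theorem PPref.ext' {A : Type*} {P Q : PPref A} (h : P.rel = Q.rel) : P = Q := by
  cases P; cases Q; cases h; rfl

/-- The single-edge partial preference `x ≻ y`. -/
def edgePref {A : Type*} (x y : A) (hxy : x ≠ y) : PPref A where
  rel a b := a = x ∧ b = y
  irrefl a h := hxy (h.1.symm.trans h.2)
  antisymm a b h h' := hxy (h.1.symm.trans h'.2)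
  trans a _ c h h' := ⟨h.1, h'.2⟩

/-- A linear order on a finite type with prescribed top element `t`. -/
noncomputable def topPref {B : Type*} [Fintype B] (t : B) : LPref B :=
  let φ := Fintype.equivFin B
  ⟨⟨fun a b => (a = t ∧ b ≠ t) ∨ (a ≠ t ∧ b ≠ t ∧ φ a < φ b),
    by rintro a (⟨h1, h2⟩ | ⟨h1, h2, h3⟩); exacts [h2 h1, lt_irrefl _ h3],
    by
      rintro a b (⟨h1, h2⟩ | ⟨h1, h2, h3⟩) (⟨h1', h2'⟩ | ⟨h1', h2', h3'⟩)
      · exact h2 h1'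
      · exact h2' h1
      · exact h2 h1'
      · exact absurd h3' (not_lt.2 h3.le),
    by
      rintro a b c (⟨h1, h2⟩ | ⟨h1, h2, h3⟩) (⟨h1', h2'⟩ | ⟨h1', h2', h3'⟩)
      · exact absurd h1' h2
      · exact Or.inl ⟨h1, h2'⟩
      · exact absurd h1' h2
      · exact Or.inr ⟨h1, h2', h3.trans h3'⟩⟩,
   by
      intro a b hab
      by_cases ha : a = t
      · exact Or.inl (Or.inl ⟨ha, fun hb => hab (ha.trans hb.symm)⟩)
      · by_cases hb : b = t
        · exact Or.inr (Or.inl ⟨hb, ha⟩)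
        · rcases lt_or_gt_of_ne (fun h : φ a = φ b => hab (φ.injective h)) with h | h
          · exact Or.inl (Or.inr ⟨ha, hb, h⟩)
          · exact Or.inr (Or.inr ⟨hb, ha, h⟩)⟩

theorem gurus_eq_of_step {N A : Type*} [Fintype N]
    (g : (N → PPref A) → N → Set N) (P : N → PPref A) (S : N → LPref N)
    (D : N → LPref A) (i j : N)
    (hij : proxyOf g P S i = j) (hj : proxyOf g P S j = j)
    (hlin : (P j).isLinear) : gurus g P S D i = ⟨P j, hlin⟩ := by
  have hcard : 0 < Fintype.card N := Fintype.card_pos_iff.2 ⟨i⟩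
  obtain ⟨n, hn⟩ := Nat.exists_eq_succ_of_ne_zero hcard.ne'
  have ht : (proxyOf g P S)^[Fintype.card N] i = j := by
    rw [hn, Function.iterate_succ_apply, hij, Function.iterate_fixed hj]
  simp only [gurus, ht]
  rw [if_pos hj]
  exact dif_pos (ht.symm ▸ hlin : (P ((proxyOf g P S)^[Fintype.card N] i)).isLinear)

end Aux

/-- If `f` (on `n` voters) is IIA-manipulable and invariant under uniform voter addition —
where `F` is the rule on the electorate augmented by `m!` voters, one holding each linear
order over `A` (the extra voters indexed by a type `M` in bijection with the linear
orders) — then `(F, SUBSET)` is proxy-choice manipulable over `n + m!` voters. -/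
theorem iiamanip_uvai_implies_pcmanip {N M A : Type*}
    [Fintype N] [DecidableEq N] [Fintype M] [DecidableEq M] [Fintype A]
    (e : M ≃ LPref A)
    (f : (N → LPref A) → A) (F : (N ⊕ M → LPref A) → A)
    (hUVAI : ∀ L : N → LPref A, F (Sum.elim L fun m => e m) = f L)
    (hIIA : IIAManip f) :
    PCManip F (SUBSETg (N := N ⊕ M) (A := A)) := by
  classical
  obtain ⟨L, i, Li', hne, hxy, hxy'⟩ := hIIA
  set x := f (Function.update L i Li') with hx
  set y := f L with hy
  have hxyne : x ≠ y := fun h => (L i).1.irrefl x (h ▸ hxy)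
  set Pe : PPref A := edgePref x y hxyne with hPedef
  have hPeNE : ¬ Pe.isEmptyPref := fun h => h x y ⟨rfl, rfl⟩
  have hPeNL : ¬ Pe.isLinear := by
    intro hlin
    have hmem : ∀ z : A, z = x ∨ z = y := by
      intro z
      by_contra hz
      push_neg at hz
      rcases hlin z x hz.1 with h | h
      · exact hxyne h.2
      · exact hz.2 h.2
    apply hne
    apply Subtype.ext
    apply PPref.ext'
    funext a b
    apply propext
    rcases hmem a with ha | ha <;> rcases hmem b with hb | hb <;> subst ha <;> subst hb
    · exact iff_of_false (Li'.1.irrefl _) ((L i).1.irrefl _)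
    · exact iff_of_true hxy' hxy
    · exact iff_of_false (Li'.1.antisymm _ _ hxy') ((L i).1.antisymm _ _ hxy)
    · exact iff_of_false (Li'.1.irrefl _) ((L i).1.irrefl _)
  set P : N ⊕ M → PPref A :=
    Sum.elim (Function.update (fun j => (L j).1) i Pe) (fun m => (e m).1) with hP
  set D : N ⊕ M → LPref A := fun _ => L i with hD
  have hPi : P (Sum.inl i) = Pe := by rw [hP, Sum.elim_inl, Function.update_self]
  have hPk : ∀ k : N, k ≠ i → P (Sum.inl k) = (L k).1 := by
    intro k hk; rw [hP, Sum.elim_inl, Function.update_of_ne hk]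
  have hPm : ∀ m : M, P (Sum.inr m) = (e m).1 := fun m => rfl
  have notEmpty : ∀ Q : PPref A, Q.isLinear → ¬ Q.isEmptyPref := by
    intro Q hQ he
    rcases hQ x y hxyne with h | h
    exacts [he _ _ h, he _ _ h]
  -- voters with linear preferences are their own proxies
  have self : ∀ (S : N ⊕ M → LPref (N ⊕ M)) (j : N ⊕ M), (P j).isLinear →
      proxyOf SUBSETg P S j = j := by
    intro S j hlin
    have hg : SUBSETg P j = {j} := by
      simp only [SUBSETg]
      rw [if_neg (notEmpty _ hlin), if_pos hlin]
    simp only [proxyOf]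
    rw [if_pos (Or.inl hg)]
  -- the permitted-proxy set of voter `i`
  have hG : SUBSETg P (Sum.inl i) = {j | j ≠ Sum.inl i ∧ Pe.subsetOf (P j)} := by
    simp only [SUBSETg]
    rw [hPi, if_neg hPeNE, if_neg hPeNL]
  have hm : ∀ Q : LPref A, Q.1.rel x y → Sum.inr (e.symm Q) ∈ SUBSETg P (Sum.inl i) := by
    intro Q hQ
    rw [hG]
    refine ⟨Sum.inr_ne_inl, ?_⟩
    intro a b hab
    obtain ⟨ha, hb⟩ := hab
    subst ha; subst hb
    show (P (Sum.inr (e.symm Q))).rel x y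
    rw [hPm, e.apply_symm_apply]
    exact hQ
  have hprox : ∀ (S : N ⊕ M → LPref (N ⊕ M)) (Q : LPref A), Q.1.rel x y →
      S (Sum.inl i) = topPref (Sum.inr (e.symm Q)) →
      proxyOf SUBSETg P S (Sum.inl i) = Sum.inr (e.symm Q) := by
    intro S Q hQ hS
    have hm0 : Sum.inr (e.symm Q) ∈ SUBSETg P (Sum.inl i) := hm Q hQ
    have hcond : ¬ (SUBSETg P (Sum.inl i) = {Sum.inl i} ∨ SUBSETg P (Sum.inl i) = ∅) := by
      rintro (h | h)
      · rw [h] at hm0; exact Sum.inr_ne_inl hm0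
      · rw [h] at hm0; exact hm0
    have htop : ∀ k, k ≠ Sum.inr (e.symm Q) →
        (S (Sum.inl i)).1.rel (Sum.inr (e.symm Q)) k := by
      intro k hk
      rw [hS]
      exact Or.inl ⟨rfl, hk⟩
    have hex : ∃ j ∈ SUBSETg P (Sum.inl i), ∀ k ∈ SUBSETg P (Sum.inl i),
        k ≠ j → (S (Sum.inl i)).1.rel j k :=
      ⟨_, hm0, fun k _ hkne => htop k hkne⟩
    simp only [proxyOf]
    rw [if_neg hcond, dif_pos hex]
    obtain ⟨hjG, hjmax⟩ := hex.choose_spec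
    by_contra hne2
    have h1 := hjmax _ hm0 (Ne.symm hne2)
    exact (S (Sum.inl i)).1.antisymm _ _ h1 (htop _ hne2)
  -- the outcome under a suitable proxy ranking for voter `i`
  have key : ∀ (S : N ⊕ M → LPref (N ⊕ M)) (Q : LPref A), Q.1.rel x y →
      S (Sum.inl i) = topPref (Sum.inr (e.symm Q)) →
      F (gurus SUBSETg P S D) = f (Function.update L i Q) := by
    intro S Q hQ hS
    have hall : gurus SUBSETg P S D = Sum.elim (Function.update L i Q) (fun m => e m) := by
      funext j
      rcases j with k | m
      · by_cases hk : k = i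
        · subst hk
          have hlin2 : (P (Sum.inr (e.symm Q))).isLinear := (e (e.symm Q)).2
          rw [gurus_eq_of_step _ _ _ _ _ _ (hprox S Q hQ hS) (self S _ hlin2) hlin2]
          apply Subtype.ext
          show P (Sum.inr (e.symm Q)) = _
          rw [hPm, e.apply_symm_apply]
          simp
        · have hlin2 : (P (Sum.inl k)).isLinear := by
            rw [hPk k hk]; exact (L k).2
          rw [gurus_eq_of_step _ _ _ _ _ _ (self S _ hlin2) (self S _ hlin2) hlin2]
          apply Subtype.ext
          show P (Sum.inl k) = _
          rw [hPk k hk]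
          simp [Function.update_of_ne hk]
      · have hlin2 : (P (Sum.inr m)).isLinear := (e m).2
        rw [gurus_eq_of_step _ _ _ _ _ _ (self S _ hlin2) (self S _ hlin2) hlin2]
        apply Subtype.ext
        rfl
    rw [hall, hUVAI]
  refine ⟨P, (fun _ => topPref (Sum.inr (e.symm (L i)))),
    Function.update (fun _ : N ⊕ M => topPref (Sum.inr (e.symm (L i))))
      (Sum.inl i) (topPref (Sum.inr (e.symm Li'))),
    D, Sum.inl i, fun j hj => Function.update_of_ne hj _ _, ?_⟩
  have h1 : F (gurus SUBSETg P
      (Function.update (fun _ : N ⊕ M => topPref (Sum.inr (e.symm (L i))))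
        (Sum.inl i) (topPref (Sum.inr (e.symm Li')))) D) = x := by
    rw [key _ Li' hxy' (Function.update_self _ _ _), hx]
  have h2 : F (gurus SUBSETg P (fun _ => topPref (Sum.inr (e.symm (L i)))) D) = y := by
    rw [key _ (L i) hxy rfl, Function.update_eq_self, hy]
  rw [h1, h2, hPi]
  exact ⟨rfl, rfl⟩
end
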